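/- For a probability measure $\mu$ on ${\rm SL}_2(\mathbb{R})$ and $0<\alpha\leq 1/2$, the contraction coefficient equals the moment: $\kappa_\alpha(\mu)=\underline\Theta_{2\alpha}(\mu)$, where $\kappa_\alpha(\mu):=\sup_{\hat v\neq\hat w}\int\left[\frac{d(\hat g\hat v,\hat g\hat w)}{d(\hat v,\hat w)}\right]^\alpha d\mu(g)$ and $\underline\Theta_{2\alpha}(\mu):=\sup_{\|v\|=1}\int\|gv\|^{-2\alpha}\,d\mu(g)$. -/

import Mathlib

open MeasureTheory ENNReal RealInnerProductSpace

noncomputable section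

abbrev Mat2 := EuclideanSpace ℝ (Fin 2) →L[ℝ] EuclideanSpace ℝ (Fin 2)

instance : MeasurableSpace Mat2 := borel _
instance : BorelSpace Mat2 := ⟨rfl⟩

/-- `‖u ∧ w‖`, the norm of the wedge of two vectors of the plane. -/
def wedgeNorm (u w : EuclideanSpace ℝ (Fin 2)) : ℝ :=
  Real.sqrt (‖u‖ ^ 2 * ‖w‖ ^ 2 - ⟪u, w⟫ ^ 2)

/-- The contraction coefficient
`κ_α(μ) = sup_{v̂ ≠ ŵ} ∫ [d(ĝv̂, ĝŵ)/d(v̂,ŵ)]^α dμ(g)` for the sine projective metric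
(computed in `ℝ≥0∞`). -/
def kappa (α : ℝ) (μ : Measure Mat2) : ℝ≥0∞ :=
  ⨆ v : EuclideanSpace ℝ (Fin 2), ⨆ w : EuclideanSpace ℝ (Fin 2),
    ⨆ _ : ‖v‖ = 1 ∧ ‖w‖ = 1 ∧ wedgeNorm v w ≠ 0,
      ∫⁻ g, (ENNReal.ofReal (wedgeNorm (g v) (g w))
          / ENNReal.ofReal (‖g v‖ * ‖g w‖ * wedgeNorm v w)) ^ α ∂μ

/-- The moment `Θ̲_{2α}(μ) = sup_{‖v‖=1} ∫ ‖gv‖^{-2α} dμ(g)` (in `ℝ≥0∞`). -/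
def underTheta2 (α : ℝ) (μ : Measure Mat2) : ℝ≥0∞ :=
  ⨆ v : EuclideanSpace ℝ (Fin 2), ⨆ _ : ‖v‖ = 1,
    ∫⁻ g, (‖g v‖₊ : ℝ≥0∞) ^ (-(2 * α)) ∂μ

/-! ### Auxiliary lemmas -/

lemma normsq (x : EuclideanSpace ℝ (Fin 2)) : ‖x‖ ^ 2 = x 0 ^ 2 + x 1 ^ 2 := by
  rw [EuclideanSpace.norm_eq, Real.sq_sqrt (by positivity)]
  simp [Fin.sum_univ_two, sq_abs]

lemma innertwo (u w : EuclideanSpace ℝ (Fin 2)) : ⟪u, w⟫ = u 0 * w 0 + u 1 * w 1 := by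
  simp [PiLp.inner_apply, Fin.sum_univ_two, RCLike.inner_apply]
  ring

lemma wedge_coords (u w : EuclideanSpace ℝ (Fin 2)) :
    wedgeNorm u w = |u 0 * w 1 - u 1 * w 0| := by
  rw [wedgeNorm, normsq, normsq, innertwo]
  rw [show (u 0 ^ 2 + u 1 ^ 2) * (w 0 ^ 2 + w 1 ^ 2) - (u 0 * w 0 + u 1 * w 1) ^ 2
      = (u 0 * w 1 - u 1 * w 0) ^ 2 by ring]
  exact Real.sqrt_sq_eq_abs _

lemma wedgeNorm_nonneg (u w : EuclideanSpace ℝ (Fin 2)) : 0 ≤ wedgeNorm u w :=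
  Real.sqrt_nonneg _

lemma apply_coords (g : Mat2) (x : EuclideanSpace ℝ (Fin 2)) (i : Fin 2) :
    (g x) i = x 0 * (g (EuclideanSpace.single 0 1)) i + x 1 * (g (EuclideanSpace.single 1 1)) i := by
  have hx : x = x 0 • EuclideanSpace.single 0 1 + x 1 • EuclideanSpace.single 1 1 := by
    ext j; fin_cases j <;> simp [EuclideanSpace.single_apply]
  conv_lhs => rw [hx]
  simp [smul_eq_mul]

lemma det_coords (g : Mat2) :
    LinearMap.det (g : EuclideanSpace ℝ (Fin 2) →ₗ[ℝ] EuclideanSpace ℝ (Fin 2)) =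
      (g (EuclideanSpace.single 0 1)) 0 * (g (EuclideanSpace.single 1 1)) 1
        - (g (EuclideanSpace.single 1 1)) 0 * (g (EuclideanSpace.single 0 1)) 1 := by
  set B := (EuclideanSpace.basisFun (Fin 2) ℝ).toBasis
  rw [← LinearMap.det_toMatrix B, Matrix.det_fin_two]
  simp [LinearMap.toMatrix_apply, B, OrthonormalBasis.coe_toBasis_repr_apply,
    OrthonormalBasis.coe_toBasis, EuclideanSpace.basisFun_repr, EuclideanSpace.basisFun_apply]

lemma wedge_invar {g : Mat2}
    (hg : LinearMap.det (g : EuclideanSpace ℝ (Fin 2) →ₗ[ℝ] EuclideanSpace ℝ (Fin 2)) = 1)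
    (v w : EuclideanSpace ℝ (Fin 2)) : wedgeNorm (g v) (g w) = wedgeNorm v w := by
  rw [det_coords] at hg
  rw [wedge_coords, wedge_coords]
  rw [apply_coords g v 0, apply_coords g v 1, apply_coords g w 0, apply_coords g w 1]
  rw [show (v 0 * g (EuclideanSpace.single 0 1) 0 + v 1 * g (EuclideanSpace.single 1 1) 0) *
        (w 0 * g (EuclideanSpace.single 0 1) 1 + w 1 * g (EuclideanSpace.single 1 1) 1) -
      (v 0 * g (EuclideanSpace.single 0 1) 1 + v 1 * g (EuclideanSpace.single 1 1) 1) *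
        (w 0 * g (EuclideanSpace.single 0 1) 0 + w 1 * g (EuclideanSpace.single 1 1) 0)
      = (g (EuclideanSpace.single 0 1) 0 * g (EuclideanSpace.single 1 1) 1
          - g (EuclideanSpace.single 1 1) 0 * g (EuclideanSpace.single 0 1) 1)
        * (v 0 * w 1 - v 1 * w 0) by ring, hg, one_mul]

lemma norm_apply_pos {g : Mat2}
    (hg : LinearMap.det (g : EuclideanSpace ℝ (Fin 2) →ₗ[ℝ] EuclideanSpace ℝ (Fin 2)) = 1)
    {v : EuclideanSpace ℝ (Fin 2)} (hv : ‖v‖ = 1) : 0 < ‖g v‖ := by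
  rcases (norm_nonneg (g v)).lt_or_eq with h | h
  · exact h
  exfalso
  have hgv : g v = 0 := by simpa using h.symm
  set u : EuclideanSpace ℝ (Fin 2) := (WithLp.equiv 2 (Fin 2 → ℝ)).symm ![-(v 1), v 0] with hu
  have h1 : wedgeNorm (g v) (g u) = wedgeNorm v u := wedge_invar hg v u
  have hv2 : v 0 ^ 2 + v 1 ^ 2 = 1 := by rw [← normsq, hv]; norm_num
  have hu0 : u 0 = -(v 1) := rfl
  have hu1 : u 1 = v 0 := rfl
  rw [wedge_coords, wedge_coords, hgv, hu0, hu1] at h1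
  simp only [PiLp.zero_apply, zero_mul, sub_zero, mul_zero, abs_zero] at h1
  rw [show v 0 * v 0 - v 1 * -v 1 = v 0 ^ 2 + v 1 ^ 2 by ring, hv2] at h1
  norm_num at h1

lemma two_mul_le_sq_add_sq (a b : ℝ≥0∞) : 2 * (a * b) ≤ a * a + b * b := by
  rcases eq_or_ne a ⊤ with ha | ha
  · rcases eq_or_ne b 0 with hb | hb
    · simp [hb]
    · have h2 : a * a = ⊤ := by simp [ha]
      simp [h2]
  rcases eq_or_ne b ⊤ with hb | hb
  · rcases eq_or_ne a 0 with ha0 | ha0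
    · simp [ha0]
    · have h2 : b * b = ⊤ := by simp [hb]
      simp [h2]
  lift a to NNReal using ha
  lift b to NNReal using hb
  rw [← ENNReal.coe_mul, ← ENNReal.coe_mul, ← ENNReal.coe_mul, ← ENNReal.coe_add,
    ← ENNReal.coe_ofNat, ← ENNReal.coe_mul, ENNReal.coe_le_coe, ← NNReal.coe_le_coe]
  push_cast
  nlinarith [sq_nonneg ((a : ℝ) - b)]

lemma coe_rpow_neg_ne_top {x : NNReal} (hx : x ≠ 0) (α : ℝ) : ((x : ℝ≥0∞)) ^ (-α) ≠ ⊤ := by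
  rw [ENNReal.rpow_neg]
  refine ENNReal.inv_ne_top.mpr ?_
  simp [ENNReal.rpow_eq_zero_iff, hx]

lemma rpow_neg_mul_self {α : ℝ} (hα : 0 < α) {x : ℝ≥0∞} (hx : x ≠ ⊤) :
    x ^ (-α) * x ^ (-α) = x ^ (-(2 * α)) := by
  rcases eq_or_ne x 0 with h0 | h0
  · rw [h0, ENNReal.zero_rpow_of_neg (by linarith), ENNReal.zero_rpow_of_neg (by linarith),
      ENNReal.top_mul_top]
  · rw [← ENNReal.rpow_add _ _ h0 hx]; ring_nf

lemma integrand_eq {α : ℝ} {g : Mat2}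
    (hg : LinearMap.det (g : EuclideanSpace ℝ (Fin 2) →ₗ[ℝ] EuclideanSpace ℝ (Fin 2)) = 1)
    {v w : EuclideanSpace ℝ (Fin 2)} (hv : ‖v‖ = 1) (hw : ‖w‖ = 1)
    (hvw : wedgeNorm v w ≠ 0) :
    (ENNReal.ofReal (wedgeNorm (g v) (g w))
        / ENNReal.ofReal (‖g v‖ * ‖g w‖ * wedgeNorm v w)) ^ α
      = (‖g v‖₊ : ℝ≥0∞) ^ (-α) * (‖g w‖₊ : ℝ≥0∞) ^ (-α) := by
  have hW : 0 < wedgeNorm v w := (wedgeNorm_nonneg v w).lt_of_ne (Ne.symm hvw)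
  have hx := norm_apply_pos hg hv
  have hy := norm_apply_pos hg hw
  rw [wedge_invar hg v w,
    ← ENNReal.ofReal_div_of_pos (by positivity),
    show wedgeNorm v w / (‖g v‖ * ‖g w‖ * wedgeNorm v w) = (‖g v‖ * ‖g w‖)⁻¹ by
      rw [eq_comm, inv_eq_iff_eq_inv, inv_div]
      field_simp,
    ENNReal.ofReal_inv_of_pos (by positivity),
    ENNReal.ofReal_mul (norm_nonneg _),
    ofReal_norm, ofReal_norm, enorm_eq_nnnorm, enorm_eq_nnnorm,
    ENNReal.inv_rpow, ← ENNReal.rpow_neg,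
    ENNReal.mul_rpow_of_ne_top ENNReal.coe_ne_top ENNReal.coe_ne_top]

lemma meas_aux (v : EuclideanSpace ℝ (Fin 2)) (β : ℝ) :
    Measurable fun g : Mat2 => (‖g v‖₊ : ℝ≥0∞) ^ β := by
  have h1 : Continuous fun g : Mat2 => g v :=
    (ContinuousLinearMap.apply ℝ (EuclideanSpace ℝ (Fin 2)) v).continuous
  exact (ENNReal.continuous_rpow_const.comp
    (ENNReal.continuous_coe.comp (continuous_nnnorm.comp h1))).measurable

theorem kappa_eq_underTheta {α : ℝ} (hα0 : 0 < α) (hα1 : α ≤ 1 / 2)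
    (μ : Measure Mat2) [IsProbabilityMeasure μ]
    (hdet : ∀ᵐ (g : Mat2) ∂μ, LinearMap.det (g : EuclideanSpace ℝ (Fin 2) →ₗ[ℝ] EuclideanSpace ℝ (Fin 2)) = 1) :
    kappa α μ = underTheta2 α μ := by
  have theta_le : ∀ v : EuclideanSpace ℝ (Fin 2), ‖v‖ = 1 →
      ∫⁻ g, (‖g v‖₊ : ℝ≥0∞) ^ (-(2 * α)) ∂μ ≤ underTheta2 α μ := by
    intro v hv
    exact le_iSup_of_le v (le_iSup_of_le hv le_rfl)
  apply le_antisymm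
  · -- κ ≤ Θ
    refine iSup_le fun v => iSup_le fun w => iSup_le fun h => ?_
    obtain ⟨hv, hw, hvw⟩ := h
    have hcongr : ∫⁻ g, (ENNReal.ofReal (wedgeNorm (g v) (g w))
          / ENNReal.ofReal (‖g v‖ * ‖g w‖ * wedgeNorm v w)) ^ α ∂μ
        = ∫⁻ g, (‖g v‖₊ : ℝ≥0∞) ^ (-α) * (‖g w‖₊ : ℝ≥0∞) ^ (-α) ∂μ :=
      lintegral_congr_ae (hdet.mono fun g hg => integrand_eq hg hv hw hvw)
    rw [hcongr]
    have key : 2 * ∫⁻ g, (‖g v‖₊ : ℝ≥0∞) ^ (-α) * (‖g w‖₊ : ℝ≥0∞) ^ (-α) ∂μ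
        ≤ 2 * underTheta2 α μ := by
      calc 2 * ∫⁻ g, (‖g v‖₊ : ℝ≥0∞) ^ (-α) * (‖g w‖₊ : ℝ≥0∞) ^ (-α) ∂μ
          = ∫⁻ g, 2 * ((‖g v‖₊ : ℝ≥0∞) ^ (-α) * (‖g w‖₊ : ℝ≥0∞) ^ (-α)) ∂μ :=
            (lintegral_const_mul' 2 _ (by simp)).symm
        _ ≤ ∫⁻ g, ((‖g v‖₊ : ℝ≥0∞) ^ (-(2*α)) + (‖g w‖₊ : ℝ≥0∞) ^ (-(2*α))) ∂μ := by
            refine lintegral_mono fun g => ?_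
            calc 2 * ((‖g v‖₊ : ℝ≥0∞) ^ (-α) * (‖g w‖₊ : ℝ≥0∞) ^ (-α))
                ≤ (‖g v‖₊ : ℝ≥0∞) ^ (-α) * (‖g v‖₊ : ℝ≥0∞) ^ (-α)
                  + (‖g w‖₊ : ℝ≥0∞) ^ (-α) * (‖g w‖₊ : ℝ≥0∞) ^ (-α) :=
                  two_mul_le_sq_add_sq _ _
              _ = (‖g v‖₊ : ℝ≥0∞) ^ (-(2*α)) + (‖g w‖₊ : ℝ≥0∞) ^ (-(2*α)) := by
                  rw [rpow_neg_mul_self hα0 ENNReal.coe_ne_top,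
                    rpow_neg_mul_self hα0 ENNReal.coe_ne_top]
        _ = (∫⁻ g, (‖g v‖₊ : ℝ≥0∞) ^ (-(2*α)) ∂μ) + ∫⁻ g, (‖g w‖₊ : ℝ≥0∞) ^ (-(2*α)) ∂μ :=
            lintegral_add_left (meas_aux v _) _
        _ ≤ underTheta2 α μ + underTheta2 α μ := add_le_add (theta_le v hv) (theta_le w hw)
        _ = 2 * underTheta2 α μ := (two_mul _).symm
    exact (ENNReal.mul_le_mul_iff_right two_ne_zero ENNReal.ofNat_ne_top).mp key
  · -- Θ ≤ κ
    refine iSup_le fun v => iSup_le fun hv => ?_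
    have hv2 : v 0 ^ 2 + v 1 ^ 2 = 1 := by rw [← normsq, hv]; norm_num
    set u : EuclideanSpace ℝ (Fin 2) := (WithLp.equiv 2 (Fin 2 → ℝ)).symm ![-(v 1), v 0] with hu
    have hu0 : u 0 = -(v 1) := rfl
    have hu1 : u 1 = v 0 := rfl
    set t : ℕ → ℝ := fun n => ((n : ℝ) + 1)⁻¹ with ht
    have ht0 : ∀ n, 0 < t n := fun n => by positivity
    have ht1 : ∀ n, t n ≤ 1 := fun n => by
      rw [ht]
      rw [inv_le_one_iff₀]
      right; linarith [Nat.cast_nonneg (α := ℝ) n]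
    have hs0 : ∀ n, 0 < Real.sin (t n) := fun n =>
      Real.sin_pos_of_pos_of_lt_pi (ht0 n) (lt_of_le_of_lt (ht1 n) (by linarith [Real.pi_gt_three]))
    set w : ℕ → EuclideanSpace ℝ (Fin 2) :=
      fun n => Real.cos (t n) • v + Real.sin (t n) • u with hwdef
    have hw0 : ∀ n, (w n) 0 = Real.cos (t n) * v 0 - Real.sin (t n) * v 1 := by
      intro n
      simp [hwdef, hu0, smul_eq_mul]
      ring
    have hw1 : ∀ n, (w n) 1 = Real.cos (t n) * v 1 + Real.sin (t n) * v 0 := by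
      intro n
      simp [hwdef, hu1, smul_eq_mul]
    have hwnorm : ∀ n, ‖w n‖ = 1 := by
      intro n
      have h2 : ‖w n‖ ^ 2 = 1 := by
        rw [normsq, hw0, hw1]
        have := Real.sin_sq_add_cos_sq (t n)
        nlinarith [hv2]
      nlinarith [norm_nonneg (w n)]
    have hwedge : ∀ n, wedgeNorm v (w n) ≠ 0 := by
      intro n
      rw [wedge_coords, hw0 n, hw1 n,
        show v 0 * (Real.cos (t n) * v 1 + Real.sin (t n) * v 0)
          - v 1 * (Real.cos (t n) * v 0 - Real.sin (t n) * v 1)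
          = Real.sin (t n) * (v 0 ^ 2 + v 1 ^ 2) by ring, hv2, mul_one]
      exact abs_ne_zero.mpr (ne_of_gt (hs0 n))
    -- convergence of w n to v
    have htend : Filter.Tendsto w Filter.atTop (nhds v) := by
      have h1 : Filter.Tendsto t Filter.atTop (nhds 0) := by
        have := tendsto_one_div_add_atTop_nhds_zero_nat (𝕜 := ℝ)
        simpa [ht, one_div] using this
      have hc : Filter.Tendsto (fun n => Real.cos (t n)) Filter.atTop (nhds 1) := by
        simpa [Function.comp_def] using (Real.continuous_cos.tendsto 0).comp h1
      have hs : Filter.Tendsto (fun n => Real.sin (t n)) Filter.atTop (nhds 0) := by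
        simpa [Function.comp_def] using (Real.continuous_sin.tendsto 0).comp h1
      have := (hc.smul_const v).add (hs.smul_const u)
      simpa [hwdef] using this
    -- the functions
    set G : ℕ → Mat2 → ℝ≥0∞ :=
      fun n g => (‖g v‖₊ : ℝ≥0∞) ^ (-α) * (‖g (w n)‖₊ : ℝ≥0∞) ^ (-α) with hG
    have hGmeas : ∀ n, Measurable (G n) := fun n => (meas_aux v _).mul (meas_aux (w n) _)
    have hGlim : ∀ᵐ g ∂μ, Filter.Tendsto (fun n => G n g) Filter.atTop
        (nhds ((‖g v‖₊ : ℝ≥0∞) ^ (-(2 * α)))) := by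
      refine hdet.mono fun g hg => ?_
      have hgx : (0 : ℝ) < ‖g v‖ := norm_apply_pos hg hv
      have h1 : Filter.Tendsto (fun n => g (w n)) Filter.atTop (nhds (g v)) :=
        (g.continuous.tendsto v).comp htend
      have h2 : Filter.Tendsto (fun n => (‖g (w n)‖₊ : ℝ≥0∞)) Filter.atTop
          (nhds (‖g v‖₊ : ℝ≥0∞)) :=
        (ENNReal.continuous_coe.tendsto _).comp ((continuous_nnnorm.tendsto _).comp h1)
      have h3 : Filter.Tendsto (fun n => (‖g (w n)‖₊ : ℝ≥0∞) ^ (-α)) Filter.atTop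
          (nhds ((‖g v‖₊ : ℝ≥0∞) ^ (-α))) :=
        (ENNReal.continuous_rpow_const.tendsto _).comp h2
      have h4 := ENNReal.Tendsto.const_mul h3
        (Or.inr (coe_rpow_neg_ne_top (x := ‖g v‖₊) (nnnorm_ne_zero_iff.mpr (norm_ne_zero_iff.mp hgx.ne')) α))
      rwa [rpow_neg_mul_self hα0 ENNReal.coe_ne_top] at h4
    have hcongr2 : ∫⁻ g, (‖g v‖₊ : ℝ≥0∞) ^ (-(2 * α)) ∂μ
        = ∫⁻ g, Filter.liminf (fun n => G n g) Filter.atTop ∂μ :=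
      lintegral_congr_ae (hGlim.mono fun g hg => hg.liminf_eq.symm)
    rw [hcongr2]
    refine le_trans (lintegral_liminf_le hGmeas) ?_
    have hb : ∀ n, ∫⁻ g, G n g ∂μ ≤ kappa α μ := by
      intro n
      have hc : ∫⁻ g, G n g ∂μ = ∫⁻ g, (ENNReal.ofReal (wedgeNorm (g v) (g (w n)))
          / ENNReal.ofReal (‖g v‖ * ‖g (w n)‖ * wedgeNorm v (w n))) ^ α ∂μ :=
        lintegral_congr_ae (hdet.mono fun g hg =>
          (integrand_eq hg hv (hwnorm n) (hwedge n)).symm)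
      rw [hc]
      exact le_iSup_of_le v (le_iSup_of_le (w n) (le_iSup_of_le ⟨hv, hwnorm n, hwedge n⟩ le_rfl))
    calc Filter.liminf (fun n => ∫⁻ g, G n g ∂μ) Filter.atTop
        ≤ Filter.liminf (fun _ : ℕ => kappa α μ) Filter.atTop :=
          Filter.liminf_le_liminf (Filter.Eventually.of_forall hb)
      _ = kappa α μ := Filter.liminf_const _
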